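/- Let R be a commutative domain and ι : R → Λ an injective ring homomorphism whose image lies in the center of Λ. Let M be a finitely generated torsion Λ-module which is completely faithful, and let M(R) = {m ∈ M : ι(r)m = 0 for some nonzero r ∈ R} be its R-torsion submodule (a Λ-submodule of M, by centrality of the image of ι). Then M(R) is a pseudo-null Λ-module. -/

import Mathlib

open CategoryTheory

/-- A module is torsion if every element is annihilated by a nonzero ring element. -/
def IsTorsionMod (Λ : Type) [Ring Λ] (M : Type) [AddCommGroup M] [Module Λ M] : Prop :=
  ∀ m : M, ∃ l : Λ, l ≠ 0 ∧ l • m = 0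

/-- A finitely generated torsion `Λ`-module is pseudo-null if `Ext¹_Λ(M, Λ) = 0`. -/
def IsPseudoNull (Λ : Type) [Ring Λ] (M : Type) [AddCommGroup M] [Module Λ M] : Prop :=
  Module.Finite Λ M ∧ IsTorsionMod Λ M ∧
    Subsingleton (((Ext ℤ (ModuleCat Λ) 1).obj (Opposite.op (ModuleCat.of Λ M))).obj
      (ModuleCat.of Λ Λ))

/-- `N` is pseudo-related to a subquotient of `M`: there are submodules `A ≤ B` of `M`,
a submodule `N₁ ≤ N` with `N/N₁` pseudo-null, a pseudo-null submodule `C` of `B/A`, and a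
`Λ`-homomorphism `N₁ → (B/A)/C` with pseudo-null kernel and cokernel. -/
def PseudoRelated (Λ : Type) [Ring Λ] (N M : Type) [AddCommGroup N] [Module Λ N]
    [AddCommGroup M] [Module Λ M] : Prop :=
  ∃ (A B : Submodule Λ M), A ≤ B ∧
    ∃ (N₁ : Submodule Λ N) (C : Submodule Λ (↥B ⧸ A.comap B.subtype))
      (f : N₁ →ₗ[Λ] ((↥B ⧸ A.comap B.subtype) ⧸ C)),
      IsPseudoNull Λ (N ⧸ N₁) ∧ IsPseudoNull Λ C ∧
      IsPseudoNull Λ (LinearMap.ker f) ∧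
      IsPseudoNull Λ ((((↥B ⧸ A.comap B.subtype) ⧸ C)) ⧸ LinearMap.range f)

/-- A finitely generated torsion `Λ`-module `M` is completely faithful if every finitely
generated torsion `Λ`-module `N` which is not pseudo-null and is pseudo-related to a
subquotient of `M` has trivial global annihilator ideal. -/
def CompletelyFaithful (Λ : Type) [Ring Λ] (M : Type) [AddCommGroup M] [Module Λ M] : Prop :=
  ∀ (N : Type) [AddCommGroup N] [Module Λ N],
    Module.Finite Λ N → IsTorsionMod Λ N → ¬ IsPseudoNull Λ N → PseudoRelated Λ N M →
      ∀ l : Λ, (∀ n : N, l • n = 0) → l = 0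

/-- The `R`-torsion submodule `M(R) = {m ∈ M : ι(r) • m = 0 for some nonzero r ∈ R}`, where
`ι : R → Λ` is a ring homomorphism from a commutative domain `R` with central image. -/
def rTorsionSub (R : Type) [CommRing R] [IsDomain R] (Λ : Type) [Ring Λ] (ι : R →+* Λ)
    (hcen : ∀ (r : R) (x : Λ), ι r * x = x * ι r)
    (M : Type) [AddCommGroup M] [Module Λ M] : Submodule Λ M where
  carrier := {m | ∃ r : R, r ≠ 0 ∧ ι r • m = 0}
  zero_mem' := ⟨1, one_ne_zero, smul_zero _⟩
  add_mem' := by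
    rintro a b ⟨r, hr, ha⟩ ⟨s, hs, hb⟩
    refine ⟨r * s, mul_ne_zero hr hs, ?_⟩
    have h1 : ι (r * s) • a = 0 := by
      rw [mul_comm, map_mul, mul_smul, ha, smul_zero]
    have h2 : ι (r * s) • b = 0 := by
      rw [map_mul, mul_smul, hb, smul_zero]
    rw [smul_add, h1, h2, add_zero]
  smul_mem' := by
    rintro c m ⟨r, hr, hm⟩
    refine ⟨r, hr, ?_⟩
    rw [smul_smul, hcen r c, mul_smul, hm, smul_zero]

theorem mem_rTorsionSub {R : Type} [CommRing R] [IsDomain R] {Λ : Type} [Ring Λ] {ι : R →+* Λ}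
    {hcen : ∀ (r : R) (x : Λ), ι r * x = x * ι r} {M : Type} [AddCommGroup M] [Module Λ M]
    (m : M) : m ∈ rTorsionSub R Λ ι hcen M ↔ ∃ r : R, r ≠ 0 ∧ ι r • m = 0 := Iff.rfl

lemma isPseudoNull_of_subsingleton (Λ : Type) [Ring Λ] [Nontrivial Λ] (M : Type)
    [AddCommGroup M] [Module Λ M] [Subsingleton M] : IsPseudoNull Λ M := by
  refine ⟨Module.Finite.of_surjective (0 : Λ →ₗ[Λ] M)
    (fun m => ⟨0, Subsingleton.elim _ _⟩), fun m => ⟨1, one_ne_zero, Subsingleton.elim _ _⟩, ?_⟩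
  haveI : Subsingleton (ModuleCat.of Λ M) := inferInstanceAs (Subsingleton M)
  haveI hproj : CategoryTheory.Projective (ModuleCat.of Λ M) :=
    (ModuleCat.isZero_of_subsingleton (ModuleCat.of Λ M)).projective
  have hz : CategoryTheory.Limits.IsZero (((Ext ℤ (ModuleCat Λ) 1).obj
      (Opposite.op (ModuleCat.of Λ M))).obj (ModuleCat.of Λ Λ)) :=
    isZero_Ext_succ_of_projective (R := ℤ) (ModuleCat.of Λ M) (ModuleCat.of Λ Λ) 0
  have hid := CategoryTheory.Limits.IsZero.eq_of_src hz
    (𝟙 (((Ext ℤ (ModuleCat Λ) 1).obj (Opposite.op (ModuleCat.of Λ M))).obj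
      (ModuleCat.of Λ Λ))) 0
  constructor
  intro a b
  have ha : a = 0 := by
    conv_lhs => rw [← ModuleCat.id_apply _ a, hid]
    rfl
  have hb : b = 0 := by
    conv_lhs => rw [← ModuleCat.id_apply _ b, hid]
    rfl
  rw [ha, hb]

/-- Let `R` be a commutative domain and `ι : R → Λ` an injective ring
homomorphism with central image. If `M` is a finitely generated torsion `Λ`-module which is
completely faithful, then its `R`-torsion submodule `M(R)` is pseudo-null. -/
theorem isPseudoNull_rTorsion_of_completelyFaithful
    (Λ : Type) [Ring Λ] [IsNoetherianRing Λ] [IsNoetherianRing Λᵐᵒᵖ] [NoZeroDivisors Λ]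
    (R : Type) [CommRing R] [IsDomain R] (ι : R →+* Λ) (hinj : Function.Injective ι)
    (hcen : ∀ (r : R) (x : Λ), ι r * x = x * ι r)
    (M : Type) [AddCommGroup M] [Module Λ M] [Module.Finite Λ M]
    (htors : IsTorsionMod Λ M) (hcf : CompletelyFaithful Λ M) :
    IsPseudoNull Λ (rTorsionSub R Λ ι hcen M) := by
  have hnontriv : Nontrivial Λ := by
    constructor
    exact ⟨ι 0, ι 1, fun h => zero_ne_one (hinj h)⟩
  set T := rTorsionSub R Λ ι hcen M with hT
  by_contra hnot
  -- T is finitely generated (Λ Noetherian, M finite)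
  have hnoe : IsNoetherian Λ M := isNoetherian_of_isNoetherianRing_of_finite Λ M
  have hfin : Module.Finite Λ T :=
    Module.Finite.iff_fg.mpr (IsNoetherian.noetherian T)
  -- T is torsion
  have htorsT : IsTorsionMod Λ T := by
    intro m
    obtain ⟨l, hl, hlm⟩ := htors (m : M)
    exact ⟨l, hl, Subtype.ext (by simpa using hlm)⟩
  -- T is pseudo-related to a subquotient of M
  have hrel : PseudoRelated Λ T M := by
    refine ⟨⊥, T, bot_le, ⊤, ⊥, ?_, ?_, ?_, ?_, ?_⟩
    · exact (Submodule.mkQ ⊥) ∘ₗ (Submodule.mkQ ((⊥ : Submodule Λ M).comap T.subtype)) ∘ₗ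
        (⊤ : Submodule Λ T).subtype
    · have : Subsingleton (T ⧸ (⊤ : Submodule Λ T)) :=
        Submodule.Quotient.subsingleton_iff.mpr rfl
      exact isPseudoNull_of_subsingleton Λ _
    · have : Subsingleton (⊥ : Submodule Λ (T ⧸ (⊥ : Submodule Λ M).comap T.subtype)) :=
        inferInstance
      exact isPseudoNull_of_subsingleton Λ _
    · -- kernel is trivial since the map is injective
      have hker : LinearMap.ker ((Submodule.mkQ (⊥ : Submodule Λ
          (T ⧸ (⊥ : Submodule Λ M).comap T.subtype))) ∘ₗ
          (Submodule.mkQ ((⊥ : Submodule Λ M).comap T.subtype)) ∘ₗ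
          (⊤ : Submodule Λ T).subtype) = ⊥ := by
        rw [LinearMap.ker_eq_bot]
        simp only [LinearMap.coe_comp]
        have h1 : Function.Injective
            ⇑(Submodule.mkQ (⊥ : Submodule Λ (T ⧸ (⊥ : Submodule Λ M).comap T.subtype))) := by
          rw [← LinearMap.ker_eq_bot, Submodule.ker_mkQ]
        have h2 : Function.Injective ⇑(Submodule.mkQ ((⊥ : Submodule Λ M).comap T.subtype)) := by
          rw [← LinearMap.ker_eq_bot, Submodule.ker_mkQ, Submodule.comap_bot,
            Submodule.ker_subtype]
        exact h1.comp (h2.comp Subtype.val_injective)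
      rw [hker]
      exact isPseudoNull_of_subsingleton Λ _
    · -- cokernel is trivial since the map is surjective
      have hrange : LinearMap.range ((Submodule.mkQ (⊥ : Submodule Λ
          (T ⧸ (⊥ : Submodule Λ M).comap T.subtype))) ∘ₗ
          (Submodule.mkQ ((⊥ : Submodule Λ M).comap T.subtype)) ∘ₗ
          (⊤ : Submodule Λ T).subtype) = ⊤ := by
        rw [LinearMap.range_eq_top]
        simp only [LinearMap.coe_comp]
        exact (Submodule.mkQ_surjective _).comp ((Submodule.mkQ_surjective _).comp
          (fun x => ⟨⟨x, trivial⟩, rfl⟩))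
      rw [hrange]
      have : Subsingleton ((((T ⧸ (⊥ : Submodule Λ M).comap T.subtype)) ⧸
          (⊥ : Submodule Λ (T ⧸ (⊥ : Submodule Λ M).comap T.subtype))) ⧸
          (⊤ : Submodule Λ _)) := Submodule.Quotient.subsingleton_iff.mpr rfl
      exact isPseudoNull_of_subsingleton Λ _
  -- find a single nonzero r ∈ R with ι r • T = 0
  obtain ⟨s, hs⟩ : T.FG := IsNoetherian.noetherian T
  choose rfn hrfn0 hrfn using fun m : T => m.2
  classical
  set g : M → R := fun m => if h : m ∈ T then rfn ⟨m, h⟩ else 1 with hg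
  have hg0 : ∀ m : M, g m ≠ 0 := by
    intro m
    by_cases h : m ∈ T
    · simp only [hg, dif_pos h]; exact hrfn0 _
    · simp only [hg, dif_neg h]; exact one_ne_zero
  have key : ∃ r : R, r ≠ 0 ∧ ∀ n : T, (ι r) • n = 0 := by
    refine ⟨∏ m ∈ s, g m, Finset.prod_ne_zero_iff.mpr fun m _ => hg0 m, ?_⟩
    set r := ∏ m ∈ s, g m with hr
    let K : Submodule Λ M := {
      carrier := {n | ι r • n = 0}
      zero_mem' := smul_zero _
      add_mem' := fun ha hb => by
        simp only [Set.mem_setOf_eq] at *; rw [smul_add, ha, hb, add_zero]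
      smul_mem' := fun c x hx => by
        simp only [Set.mem_setOf_eq] at *
        rw [smul_smul, hcen r c, mul_smul, hx, smul_zero] }
    have hsK : (s : Set M) ⊆ K := by
      intro m hm
      have hmT : m ∈ T := hs ▸ Submodule.subset_span hm
      show ι r • m = 0
      have hrm : r = g m * ∏ x ∈ s.erase m, g x := by
        rw [hr, ← Finset.prod_erase_mul s g hm, mul_comm]
      have hgm : ι (g m) • m = 0 := by
        simp only [hg, dif_pos hmT]
        exact hrfn ⟨m, hmT⟩
      rw [hrm, map_mul, hcen (g m) (ι (∏ x ∈ s.erase m, g x)), mul_smul, hgm, smul_zero]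
    have hTK : T ≤ K := hs ▸ Submodule.span_le.mpr hsK
    intro n
    exact Subtype.ext (hTK n.2)
  obtain ⟨r, hr0, hrann⟩ := key
  have := hcf T hfin htorsT hnot hrel (ι r) hrann
  exact hr0 (hinj (by rw [this, map_zero]))
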